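/- Let τ ∈ (0,1), let x ∈ ℝ^n not be Pareto stationary, and set d := d_ω(x). Then there exists λ̄ > 0 such that for every λ ∈ (0, λ̄] and every i = 1,…,m one has F_i(x + λd) ≤ F_i(x) + λ τ θ_x(d). -/

import Mathlib

open Filter Topology
open scoped RealInnerProductSpace

noncomputable section

/-- `Euc n` is Euclidean `n`-space `ℝ^n`. -/
abbrev Euc (n : ℕ) := EuclideanSpace ℝ (Fin n)

/-- `HasDirDeriv f x d D` : the one-sided directional derivative of `f` at `x`
in direction `d` exists and equals `D`, i.e. `(f (x + α • d) - f x)/α → D` as `α → 0⁺`. -/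
def HasDirDeriv {n : ℕ} (f : Euc n → ℝ) (x d : Euc n) (D : ℝ) : Prop :=
  Filter.Tendsto (fun α : ℝ => (f (x + α • d) - f x) / α)
    (nhdsWithin 0 (Set.Ioi 0)) (nhds D)

/-- `x` is Pareto stationary for the objectives `F i`:
for every direction `d`, `max_i F_i'(x; d) ≥ 0`, i.e. some objective has
nonnegative directional derivative in direction `d`. -/
def ParetoStationary {n m : ℕ} (F : Fin m → Euc n → ℝ) (x : Euc n) : Prop :=
  ∀ d : Euc n, ∃ i : Fin m, ∃ D : ℝ, HasDirDeriv (F i) x d D ∧ 0 ≤ D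

/-- `θ_x(d) = max_i { ⟪∇g_i(x), d⟫ + ½⟪d, B_i(x) d⟫ + h_i(x+d) - h_i(x) }`. -/
def theta {n m : ℕ} (g h : Fin m → Euc n → ℝ)
    (B : Fin m → Euc n → (Euc n →L[ℝ] Euc n)) (x d : Euc n) : ℝ :=
  ⨆ i : Fin m, (⟪gradient (g i) x, d⟫ + (1 / 2) * ⟪d, B i x d⟫ + h i (x + d) - h i x)

/-- `φ_{ω,x}(d) = θ_x(d) + (ω/2)‖d‖²`. -/
def phi {n m : ℕ} (g h : Fin m → Euc n → ℝ)
    (B : Fin m → Euc n → (Euc n →L[ℝ] Euc n)) (ω : ℝ) (x d : Euc n) : ℝ :=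
  theta g h B x d + (ω / 2) * ‖d‖ ^ 2

section Helpers
open Set

lemma dirQuot_of_contDiff {n : ℕ} {f : Euc n → ℝ} (hf : ContDiff ℝ 2 f) (x e : Euc n) :
    Tendsto (fun α : ℝ => (f (x + α • e) - f x) / α) (𝓝[>] (0:ℝ)) (𝓝 ⟪gradient f x, e⟫) := by
  have hd : DifferentiableAt ℝ f x := (hf.differentiable (by norm_num)).differentiableAt
  have hgrad := hd.hasGradientAt
  rw [hasGradientAt_iff_hasFDerivAt] at hgrad
  have hline : HasDerivAt (fun t : ℝ => x + t • e) e 0 := by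
    simpa using ((hasDerivAt_id (0:ℝ)).smul_const e).const_add x
  have hcomp : HasDerivAt (fun t : ℝ => f (x + t • e)) ⟪gradient f x, e⟫ 0 := by
    have hgrad' : HasFDerivAt f ((InnerProductSpace.toDual ℝ (Euc n)) (gradient f x)) (x + (0:ℝ) • e) := by
      simpa using hgrad
    have := hgrad'.comp_hasDerivAt 0 hline
    simpa [InnerProductSpace.toDual_apply_apply, Function.comp_def] using this
  have hslope := hasDerivAt_iff_tendsto_slope.mp hcomp
  have hsub : (𝓝[>] (0:ℝ)) ≤ 𝓝[≠] (0:ℝ) :=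
    nhdsWithin_mono 0 (fun t ht => ne_of_gt ht)
  refine (hslope.mono_left hsub).congr fun t => ?_
  simp [slope_def_field]

lemma convex_dirQuot_exists {n : ℕ} {f : Euc n → ℝ} (hf : ConvexOn ℝ Set.univ f)
    (x e : Euc n) :
    ∃ D : ℝ, Tendsto (fun α : ℝ => (f (x + α • e) - f x) / α) (𝓝[>] (0:ℝ)) (𝓝 D) := by
  set φ : ℝ → ℝ := fun t => f (x + t • e) with hφdef
  have hφ : ConvexOn ℝ Set.univ φ := by
    have := hf.comp_affineMap (AffineMap.lineMap x (x + e) : ℝ →ᵃ[ℝ] Euc n)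
    have heq : (f ∘ (AffineMap.lineMap x (x + e) : ℝ →ᵃ[ℝ] Euc n)) = φ := by
      funext t
      simp [hφdef, AffineMap.lineMap_apply, add_sub_cancel_left, add_comm]
    rw [heq] at this
    simpa using this
  set q : ℝ → ℝ := fun t => (f (x + t • e) - f x) / t with hqdef
  have hq0 : ∀ t : ℝ, q t = (φ t - φ 0) / (t - 0) := by
    intro t; simp [hqdef, hφdef]
  have mono : MonotoneOn q (Set.Ioi (0:ℝ)) := by
    intro a ha b hb hab
    rw [hq0, hq0]
    exact hφ.secant_mono trivial trivial trivial (ne_of_gt ha) (ne_of_gt (lt_of_lt_of_le ha hab)) hab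
  have bdd : BddBelow (q '' Set.Ioi (0:ℝ)) := by
    refine ⟨(φ (-1) - φ 0) / ((-1:ℝ) - 0), ?_⟩
    rintro y ⟨t, ht, rfl⟩
    rw [hq0]
    exact hφ.secant_mono trivial trivial trivial (by norm_num) (ne_of_gt ht) (by linarith [Set.mem_Ioi.mp ht])
  exact ⟨_, mono.tendsto_nhdsGT bdd⟩

end Helpers

set_option maxHeartbeats 1000000 in
/-- the Armijo line search terminates: there is λ̄ > 0 such that the
Armijo condition holds for all λ ∈ (0, λ̄] and all objectives. -/
theorem armijo_line_search_finite
    {n m : ℕ} (g h : Fin m → Euc n → ℝ)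
    (B : Fin m → Euc n → (Euc n →L[ℝ] Euc n))
    (hm : 0 < m)
    (hg : ∀ i, ContDiff ℝ 2 (g i))
    (hsc : ∀ i, ∃ a : ℝ, 0 < a ∧ ∀ x y : Euc n,
      a * ‖x - y‖ ^ 2 ≤ ⟪gradient (g i) x - gradient (g i) y, x - y⟫)
    (hh : ∀ i, ConvexOn ℝ Set.univ (h i))
    (hBsymm : ∀ i x (u v : Euc n), ⟪B i x u, v⟫ = ⟪u, B i x v⟫)
    (hBpos : ∀ i x (d : Euc n), d ≠ 0 → 0 < ⟪d, B i x d⟫)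
    (ω : ℝ) (hω : 0 < ω)
    (dω : Euc n → Euc n)
    (hmin : ∀ y d, phi g h B ω y (dω y) ≤ phi g h B ω y d)
    (τ : ℝ) (hτ : τ ∈ Set.Ioo (0 : ℝ) 1)
    (x : Euc n)
    (hx : ¬ ParetoStationary (fun i y => g i y + h i y) x) :
    ∃ lam0 > (0 : ℝ), ∀ lam ∈ Set.Ioc (0 : ℝ) lam0, ∀ i,
      g i (x + lam • dω x) + h i (x + lam • dω x)
        ≤ g i x + h i x + lam * τ * theta g h B x (dω x) := by
  obtain ⟨hτ0, hτ1⟩ := hτ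
  haveI : Nonempty (Fin m) := Fin.pos_iff_nonempty.mp hm
  set d := dω x with hd
  clear_value d
  have htheta : ∀ e : Euc n, theta g h B x e =
      ⨆ i, (⟪gradient (g i) x, e⟫ + (1 / 2) * ⟪e, B i x e⟫ + h i (x + e) - h i x) :=
    fun e => rfl
  have hbdd : ∀ e : Euc n, BddAbove (Set.range fun i =>
      (⟪gradient (g i) x, e⟫ + (1 / 2) * ⟪e, B i x e⟫ + h i (x + e) - h i x)) :=
    fun e => (Set.finite_range _).bddAbove
  have hT_le : ∀ i (e : Euc n),
      (⟪gradient (g i) x, e⟫ + (1 / 2) * ⟪e, B i x e⟫ + h i (x + e) - h i x)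
        ≤ theta g h B x e := fun i e => le_ciSup (hbdd e) i
  have htheta0 : theta g h B x 0 = 0 := by
    rw [htheta]
    have h0 : (fun i : Fin m =>
        (⟪gradient (g i) x, (0:Euc n)⟫ + (1 / 2) * ⟪(0:Euc n), B i x 0⟫ + h i (x + 0) - h i x))
        = fun _ => (0:ℝ) := by
      funext i; simp
    rw [h0]; exact ciSup_const
  -- Step 1 : θ(d) < 0
  have hθd_neg : theta g h B x d < 0 := by
    by_contra hcon
    push_neg at hcon
    have hphid : 0 ≤ phi g h B ω x d := by
      unfold phi; positivity
    have hphi0 : ∀ e, 0 ≤ phi g h B ω x e := fun e => le_trans hphid (by rw [hd]; exact hmin x e)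
    apply hx
    intro e
    choose Dh hDh using fun i => convex_dirQuot_exists (hh i) x e
    set D : Fin m → ℝ := fun i => ⟪gradient (g i) x, e⟫ + Dh i with hD
    have hDD : ∀ i, HasDirDeriv (fun y => g i y + h i y) x e (D i) := by
      intro i
      exact ((dirQuot_of_contDiff (hg i) x e).add (hDh i)).congr fun t => by ring
    obtain ⟨i₀, hi₀⟩ := Finite.exists_max D
    refine ⟨i₀, D i₀, hDD i₀, ?_⟩
    by_contra hneg
    push_neg at hneg
    clear_value D
    set A : Fin m → ℝ → ℝ := fun i t =>
      ⟪gradient (g i) x, e⟫ + (t / 2) * ⟪e, B i x e⟫ + (h i (x + t • e) - h i x) / t with hA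
    have hAtend : ∀ i, Tendsto (A i) (𝓝[>] (0:ℝ)) (𝓝 (D i)) := by
      intro i
      have hc : Continuous fun t : ℝ => ⟪gradient (g i) x, e⟫ + (t / 2) * ⟪e, B i x e⟫ :=
        continuous_const.add ((continuous_id.div_const 2).mul continuous_const)
      have h1 : Tendsto (fun t : ℝ => ⟪gradient (g i) x, e⟫ + (t / 2) * ⟪e, B i x e⟫)
          (𝓝[>] (0:ℝ)) (𝓝 (⟪gradient (g i) x, e⟫)) := by
        have := (hc.tendsto 0).mono_left (nhdsWithin_le_nhds (s := Set.Ioi (0:ℝ)))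
        simpa using this
      simpa [hD, hA] using h1.add (hDh i)
    have hev : ∀ᶠ t in 𝓝[>] (0:ℝ),
        (∀ i, A i t < D i₀ / 2) ∧ D i₀ / 2 < -(ω / 2) * t * ‖e‖ ^ 2 ∧ 0 < t := by
      refine Filter.Eventually.and ?_ (Filter.Eventually.and ?_ self_mem_nhdsWithin)
      · rw [eventually_all]
        intro i
        exact (hAtend i).eventually_lt_const (by have := hi₀ i; linarith)
      · have hc : Continuous fun t : ℝ => -(ω / 2) * t * ‖e‖ ^ 2 :=
          (continuous_const.mul continuous_id).mul continuous_const
        have h2 : Tendsto (fun t : ℝ => -(ω / 2) * t * ‖e‖ ^ 2) (𝓝[>] (0:ℝ)) (𝓝 0) := by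
          have := (hc.tendsto 0).mono_left (nhdsWithin_le_nhds (s := Set.Ioi (0:ℝ)))
          simpa using this
        exact h2.eventually_const_lt (by linarith)
    obtain ⟨t, hAlt, hB2, ht⟩ := hev.exists
    have hθle : theta g h B x (t • e) ≤ t * (D i₀ / 2) := by
      rw [htheta]
      apply ciSup_le
      intro i
      have heq : (⟪gradient (g i) x, t • e⟫ + (1 / 2) * ⟪t • e, B i x (t • e)⟫
          + h i (x + t • e) - h i x) = t * A i t := by
        have hBsm : B i x (t • e) = t • (B i x e) := map_smul _ _ _
        rw [hA]
        simp only [hBsm, real_inner_smul_left, real_inner_smul_right]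
        field_simp
        ring
      rw [heq]
      exact mul_le_mul_of_nonneg_left (hAlt i).le ht.le
    have hθge : -(ω / 2) * t ^ 2 * ‖e‖ ^ 2 ≤ theta g h B x (t • e) := by
      have hp := hphi0 (t • e)
      unfold phi at hp
      have hn : ‖t • e‖ ^ 2 = t ^ 2 * ‖e‖ ^ 2 := by
        rw [norm_smul]; rw [Real.norm_eq_abs, abs_of_pos ht]; ring
      nlinarith
    nlinarith
  -- Step 2 : d ≠ 0
  have hdne : d ≠ 0 := by
    intro h0
    rw [h0, htheta0] at hθd_neg
    exact lt_irrefl _ hθd_neg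
  set θd := theta g h B x d with hθd
  set ε := (1 - τ) * (-θd) with hε
  have hεpos : 0 < ε := mul_pos (by linarith) (by linarith)
  clear_value θd ε
  have hev : ∀ᶠ lam in 𝓝[>] (0:ℝ),
      (∀ i, (g i (x + lam • d) - g i x) / lam < ⟪gradient (g i) x, d⟫ + ε)
        ∧ lam ∈ Set.Ioc (0:ℝ) 1 := by
    refine Filter.Eventually.and ?_ (Ioc_mem_nhdsGT_of_mem (by constructor <;> norm_num))
    rw [eventually_all]
    intro i
    exact (dirQuot_of_contDiff (hg i) x d).eventually_lt_const (by linarith)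
  rw [Filter.eventually_iff, mem_nhdsGT_iff_exists_Ioc_subset] at hev
  obtain ⟨u, hu, hsub⟩ := hev
  refine ⟨u, hu, ?_⟩
  intro lam hlam i
  obtain ⟨hP1, hP2⟩ := hsub hlam
  have hlam0 : 0 < lam := hP2.1
  have hgb : g i (x + lam • d) ≤ g i x + lam * (⟪gradient (g i) x, d⟫ + ε) := by
    have h1 := hP1 i
    rw [div_lt_iff₀ hlam0] at h1
    nlinarith
  have hhb : h i (x + lam • d) ≤ h i x + lam * (h i (x + d) - h i x) := by
    have hc := (hh i).2 (Set.mem_univ x) (Set.mem_univ (x + d))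
      (by linarith [hP2.2] : (0:ℝ) ≤ 1 - lam) hlam0.le (by ring)
    have heq : (1 - lam) • x + lam • (x + d) = x + lam • d := by module
    rw [heq] at hc
    rw [smul_eq_mul, smul_eq_mul] at hc
    linarith
  have hBnn : 0 ≤ ⟪d, B i x d⟫ := (hBpos i x d hdne).le
  have hkey : ⟪gradient (g i) x, d⟫ + (h i (x + d) - h i x) ≤ θd := by
    have := hT_le i d
    rw [← hθd] at this
    linarith
  have hmul : lam * (⟪gradient (g i) x, d⟫ + (h i (x + d) - h i x) + ε)
      ≤ lam * (θd + ε) := mul_le_mul_of_nonneg_left (by linarith) hlam0.le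
  have hτeq : lam * τ * θd = lam * (θd + ε) := by rw [hε]; ring
  rw [hτeq]
  linarith
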